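/- Let k be a field of characteristic p > 0 and u, v ≥ p. With Sym^n U identified with polynomials of degree ≤ n in k[x], the p-fold composition ι^p_{u,v}: Sym^{u-p}U ⊗ Sym^{v-p}U → Sym^u U ⊗ Sym^v U satisfies ι^p_{u,v}(f ⊗ g) = f ⊗ x^p g − x^p f ⊗ g. In particular, the image of ι^2_{u,v} contains nonzero tensors of rank two. -/
import Mathlib


open Polynomial
open scoped TensorProduct

/-- The map `ι : f ⊗ g ↦ f ⊗ xg - xf ⊗ g` on `k[x] ⊗ k[x]` (the maps `ι_{u,v}` of the paper,
in the polynomial model `Sym^n U` = polynomials of degree `≤ n`). -/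
noncomputable def iotaMap (k : Type) [Field k] :
    Module.End k (Polynomial k ⊗[k] Polynomial k) :=
  LinearMap.lTensor (Polynomial k) (LinearMap.mulLeft k (X : k[X])) -
    LinearMap.rTensor (Polynomial k) (LinearMap.mulLeft k (X : k[X]))

/-- `Sym^a U ⊗ Sym^b U` inside `k[x] ⊗ k[x]`: the image of
`degreeLE k a ⊗ degreeLE k b`. -/
noncomputable def symTensor (k : Type) [Field k] (a b : WithBot ℕ) :
    Submodule k (Polynomial k ⊗[k] Polynomial k) :=
  LinearMap.range (TensorProduct.map (degreeLE k a).subtype (degreeLE k b).subtype)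

set_option maxHeartbeats 1000000

lemma iotaMap_eq (k : Type) [Field k] :
    iotaMap k = LinearMap.mulLeft k ((1 : k[X]) ⊗ₜ[k] X - X ⊗ₜ[k] 1) := by
  apply TensorProduct.ext'
  intro f g
  simp [iotaMap, sub_mul, Algebra.TensorProduct.tmul_mul_tmul]

lemma tmul_mem_symTensor (k : Type) [Field k] {a b : WithBot ℕ} {f g : k[X]}
    (hf : f ∈ degreeLE k a) (hg : g ∈ degreeLE k b) :
    f ⊗ₜ[k] g ∈ symTensor k a b :=
  ⟨(⟨f, hf⟩ : degreeLE k a) ⊗ₜ[k] (⟨g, hg⟩ : degreeLE k b), rfl⟩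

/-!
STATEMENT 3: over a field of characteristic `p > 0`, for `u, v ≥ p`, the `p`-fold composition
`ι^p_{u,v} : Sym^{u-p}U ⊗ Sym^{v-p}U → Sym^u U ⊗ Sym^v U` satisfies
`ι^p(f ⊗ g) = f ⊗ x^p g - x^p f ⊗ g`.  In particular the image of
`ι²_{u,v} : Sym^{u-2}U ⊗ Sym^{v-2}U → Sym^u U ⊗ Sym^v U` contains nonzero tensors of
rank (at most) two.
-/
theorem stmt3 (k : Type) [Field k] (p : ℕ) [Fact p.Prime] [CharP k p]
    (u v : ℕ) (hu : p ≤ u) (hv : p ≤ v) :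
    (∀ f g : k[X], f ∈ degreeLE k ((u - p : ℕ) : WithBot ℕ) →
      g ∈ degreeLE k ((v - p : ℕ) : WithBot ℕ) →
      (iotaMap k ^ p) (f ⊗ₜ[k] g) = f ⊗ₜ[k] (X ^ p * g) - (X ^ p * f) ⊗ₜ[k] g) ∧
    ∃ T ∈ Submodule.map (iotaMap k ^ 2 : Module.End k (Polynomial k ⊗[k] Polynomial k))
        (symTensor k ((u - 2 : ℕ) : WithBot ℕ) ((v - 2 : ℕ) : WithBot ℕ)),
      T ≠ 0 ∧ ∃ a₁ b₁ a₂ b₂ : k[X], T = a₁ ⊗ₜ[k] b₁ + a₂ ⊗ₜ[k] b₂ := by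
  have hp := (Fact.out : p.Prime)
  have hchar : CharP (Polynomial k ⊗[k] Polynomial k) p :=
    charP_of_injective_algebraMap (algebraMap k _).injective p
  set w : Polynomial k ⊗[k] Polynomial k := (1 : k[X]) ⊗ₜ[k] X - X ⊗ₜ[k] 1 with hw
  have hpow : ∀ n : ℕ, (iotaMap k ^ n : Module.End k (Polynomial k ⊗[k] Polynomial k)) =
      LinearMap.mulLeft k (w ^ n) := by
    intro n
    rw [iotaMap_eq, LinearMap.pow_mulLeft]
  have hwp : w ^ p = (1 : k[X]) ⊗ₜ[k] (X ^ p) - (X ^ p) ⊗ₜ[k] (1 : k[X]) := by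
    rw [hw, sub_pow_char, Algebra.TensorProduct.tmul_pow, Algebra.TensorProduct.tmul_pow,
      one_pow]
  have part1 : ∀ f g : k[X],
      (iotaMap k ^ p) (f ⊗ₜ[k] g) = f ⊗ₜ[k] (X ^ p * g) - (X ^ p * f) ⊗ₜ[k] g := by
    intro f g
    rw [hpow, LinearMap.mulLeft_apply, hwp, sub_mul]
    simp [Algebra.TensorProduct.tmul_mul_tmul]
  refine ⟨fun f g _ _ => part1 f g, ?_⟩
  -- the rank-two tensor
  refine ⟨(1 : k[X]) ⊗ₜ[k] (X ^ p) - (X ^ p) ⊗ₜ[k] (1 : k[X]), ?_, ?_, ?_⟩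
  · -- membership: it is ι² applied to w^(p-2) ∈ symTensor (u-2) (v-2)
    have hp2 : 2 ≤ p := hp.two_le
    refine ⟨w ^ (p - 2), ?_, ?_⟩
    · -- w^(p-2) ∈ symTensor
      have : w ^ (p - 2) = ∑ i ∈ Finset.range (p - 2 + 1),
          ((1 : k[X]) ⊗ₜ[k] X) ^ i * (-(X ⊗ₜ[k] (1 : k[X]))) ^ (p - 2 - i) *
            (((p-2).choose i : ℕ) : Polynomial k ⊗[k] Polynomial k) := by
        rw [hw, sub_eq_add_neg, add_pow]
      rw [this]
      refine Submodule.sum_mem _ fun i hi => ?_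
      have hiu : (i : WithBot ℕ) ≤ ((v - 2 : ℕ) : WithBot ℕ) := by
        have := Finset.mem_range.mp hi
        exact_mod_cast Nat.cast_le.mpr (by omega : i ≤ v - 2)
      have hjv : ((p - 2 - i : ℕ) : WithBot ℕ) ≤ ((u - 2 : ℕ) : WithBot ℕ) := by
        exact_mod_cast Nat.cast_le.mpr (by omega : p - 2 - i ≤ u - 2)
      have hterm : ((1 : k[X]) ⊗ₜ[k] X) ^ i * (-(X ⊗ₜ[k] (1 : k[X]))) ^ (p - 2 - i) *
          (((p-2).choose i : ℕ) : Polynomial k ⊗[k] Polynomial k) =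
          ((p-2).choose i : ℕ) •
            ((((-X) ^ (p - 2 - i) : k[X])) ⊗ₜ[k] (X ^ i : k[X])) := by
        rw [← TensorProduct.neg_tmul, Algebra.TensorProduct.tmul_pow,
          Algebra.TensorProduct.tmul_pow, one_pow, one_pow,
          Algebra.TensorProduct.tmul_mul_tmul, one_mul, mul_one, mul_comm, ← nsmul_eq_mul]
      rw [hterm]
      refine nsmul_mem (tmul_mem_symTensor k ?_ ?_) _
      · rw [mem_degreeLE, degree_pow, degree_neg, degree_X]
        simpa using hjv
      · rw [mem_degreeLE, degree_X_pow]
        exact hiu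
    · rw [hpow, LinearMap.mulLeft_apply, ← hwp, ← pow_add]
      congr 1
      omega
  · -- nonzero
    intro h0
    have φ := lcoeff k 0
    set ψ : Polynomial k ⊗[k] Polynomial k →ₗ[k] k[X] :=
      (TensorProduct.lid k k[X]).toLinearMap ∘ₗ LinearMap.rTensor (k[X]) (lcoeff k 0) with hψ
    have : ψ ((1 : k[X]) ⊗ₜ[k] (X ^ p) - (X ^ p) ⊗ₜ[k] (1 : k[X])) = X ^ p := by
      simp [hψ, coeff_X_pow]
      exact Ne.symm hp.ne_zero
    rw [h0] at this
    simp at this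
    exact absurd this.symm (pow_ne_zero p X_ne_zero)
  · exact ⟨1, X ^ p, -(X ^ p), 1, by rw [sub_eq_add_neg, TensorProduct.neg_tmul]⟩
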